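/- Suppose x₁, x₂, x₃ ∈ ℝ satisfy x₁ ≥ √3/2, x₁ ≤ 1, 1 − x₃² ≥ 0, x₂ − 1/2 − k x₁ x₃ = 0, and x₁² + x₂² − 1 = 0 for some fixed k ≥ 2. Then −x₁x₃ − k x₂ x₃² − k x₁ < 0 (i.e., the refute set with the reversed inequality −x₁x₃ − k x₂x₃² − k x₁ ≥ 0 is empty). -/

import Mathlib

set_option maxHeartbeats 1000000 in
theorem one_dof_refute_set_empty (k x₁ x₂ x₃ : ℝ) (hk : 2 ≤ k)
    (h₂ : Real.sqrt 3 / 2 ≤ x₁) (h₃ : x₁ ≤ 1) (h₄ : 0 ≤ 1 - x₃ ^ 2)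
    (h₅ : x₂ - 1 / 2 - k * x₁ * x₃ = 0) (h₆ : x₁ ^ 2 + x₂ ^ 2 - 1 = 0) :
    -x₁ * x₃ - k * x₂ * x₃ ^ 2 - k * x₁ < 0 := by
  have hs : Real.sqrt 3 ^ 2 = 3 := Real.sq_sqrt (by norm_num)
  have hs1 : (1:ℝ) ≤ Real.sqrt 3 := by nlinarith [Real.sqrt_nonneg 3]
  have hx1 : (1:ℝ)/2 ≤ x₁ := by linarith
  have hx1pos : (0:ℝ) < x₁ := by linarith
  have hkpos : (0:ℝ) < k := by linarith
  have hx1sq : (3:ℝ)/4 ≤ x₁ ^ 2 := by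
    nlinarith [Real.sqrt_nonneg 3]
  have hx2sq : x₂ ^ 2 ≤ 1/4 := by linarith
  have h5' : x₂ = 1/2 + k * x₁ * x₃ := by linarith
  have key : k * x₁ * x₃ * (1 + k * x₁ * x₃) = x₂ ^ 2 - 1/4 := by
    rw [h5']; ring
  have key' : k * x₁ * x₃ * (1 + k * x₁ * x₃) ≤ 0 := by linarith
  have h1 : -1 ≤ k * x₁ * x₃ := by nlinarith [sq_nonneg (1 + k * x₁ * x₃)]
  have h0 : k * x₁ * x₃ ≤ 0 := by nlinarith [sq_nonneg (k * x₁ * x₃)]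
  have hx3 : x₃ ≤ 0 := by
    by_contra h
    push_neg at h
    nlinarith [mul_pos (mul_pos hkpos hx1pos) h]
  have hu0 : 0 ≤ -x₃ := by linarith
  have hu1 : -x₃ ≤ 1 := by nlinarith [mul_nonneg hu0 hu0]
  have H1 : 0 ≤ 1 + k * x₁ * x₃ := by linarith
  -- step1 : -k² x₁ x₃³ ≤ k x₃²
  have step1 : -(k^2 * x₁ * x₃^3) ≤ k * x₃^2 := by
    linarith [mul_nonneg H1 (mul_nonneg hkpos.le (sq_nonneg x₃))]
  have hx3sq : x₃^2 ≤ -x₃ := by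
    nlinarith [mul_nonneg hu0 (by linarith : (0:ℝ) ≤ 1 + x₃)]
  have t1 : (k/2) * x₃^2 ≤ (k/2) * (-x₃) :=
    mul_le_mul_of_nonneg_left hx3sq (by linarith)
  have hk2a : 2*k ≤ k^2 := by nlinarith
  have hk4 : (4:ℝ) ≤ k^2 := by linarith
  have A : (x₁ + k/2) * (-x₃) * (k * x₁) ≤ 1 + k/2 := by
    nlinarith [mul_nonneg H1 (by linarith : (0:ℝ) ≤ x₁ + k/2)]
  have B : 1 + k/2 < (k * x₁) * (k * x₁) := by
    nlinarith [mul_le_mul_of_nonneg_left hx1sq (by positivity : (0:ℝ) ≤ k^2)]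
  have t2 : ((x₁ + k/2) * (-x₃)) * (k * x₁) < (k * x₁) * (k * x₁) :=
    lt_of_le_of_lt A B
  have t2' : (x₁ + k/2) * (-x₃) < k * x₁ :=
    (mul_lt_mul_iff_of_pos_right (mul_pos hkpos hx1pos)).mp t2
  have hstep2 : x₁ * (-x₃) + (k/2) * x₃^2 - k * x₁ < 0 := by nlinarith [t1, t2']
  rw [h5']
  nlinarith [step1, hstep2]
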